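/- Fix x ∈ [0,1]^m and two indices i ≠ j with c_i, c_j > 0. Define x^{i,j}_ε to be the vector obtained from x by replacing x_i with x_i + ε and x_j with x_j - ε·c_i/c_j, leaving all other coordinates unchanged. Then the function ε ↦ F(x^{i,j}_ε) is convex on the interval [max{-x_i, (x_j - 1)·c_j/c_i}, min{1 - x_i, x_j·c_j/c_i}] of ε for which x^{i,j}_ε ∈ [0,1]^m. -/
import Mathlib


open Finset

lemma quad_convexOn (s : Set ℝ) (hs : Convex ℝ s) (a b d : ℝ) (ha : 0 ≤ a) :
    ConvexOn ℝ s (fun x => a * x ^ 2 + b * x + d) := by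
  refine ⟨hs, fun x _ y _ p q hp hq hpq => ?_⟩
  simp only [smul_eq_mul]
  have hq1 : q = 1 - p := by linarith
  subst hq1
  have key : p * (a * x ^ 2 + b * x + d) + (1 - p) * (a * y ^ 2 + b * y + d)
      - (a * (p * x + (1 - p) * y) ^ 2 + b * (p * x + (1 - p) * y) + d)
      = a * (p * (1 - p)) * (x - y) ^ 2 := by ring
  nlinarith [mul_nonneg (mul_nonneg ha (mul_nonneg hp hq)) (sq_nonneg (x - y))]

/-- Fix `x ∈ [0,1]^m` and two indices `i ≠ j` with positive costs.
The function `ε ↦ F(x^{i,j}_ε)`, where `x^{i,j}_ε` replaces `x_i` by `x_i + ε` and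
`x_j` by `x_j - ε c_i / c_j`, is convex on the interval
`[max{-x_i, (x_j - 1) c_j / c_i}, min{1 - x_i, x_j c_j / c_i}]`. -/
theorem pipage_step_convex (n m : ℕ) (w : Fin n → ℝ) (hw : ∀ j, 0 ≤ w j)
    (S : Fin m → Finset (Fin n)) (c : Fin m → ℝ) (hc : ∀ i, 0 < c i)
    (x : Fin m → ℝ) (hx : ∀ i, 0 ≤ x i ∧ x i ≤ 1)
    (i j : Fin m) (hij : i ≠ j) :
    ConvexOn ℝ
      (Set.Icc (max (-(x i)) ((x j - 1) * c j / c i))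
        (min (1 - x i) (x j * c j / c i)))
      (fun ε : ℝ => ∑ k, w k *
        (1 - ∏ l ∈ univ.filter (fun l => k ∈ S l),
          (1 - Function.update (Function.update x i (x i + ε)) j (x j - ε * c i / c j) l))) := by
  have hr : 0 ≤ c i / c j := le_of_lt (div_pos (hc i) (hc j))
  have hxl : ∀ l, (0:ℝ) ≤ 1 - x l := fun l => by linarith [(hx l).2]
  have key : ∀ k : Fin n, ∃ a b d : ℝ, 0 ≤ a ∧ ∀ ε : ℝ,
      w k * (1 - ∏ l ∈ univ.filter (fun l => k ∈ S l),
        (1 - Function.update (Function.update x i (x i + ε)) j (x j - ε * c i / c j) l))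
      = a * ε ^ 2 + b * ε + d := by
    intro k
    set T := univ.filter (fun l => k ∈ S l) with hT
    by_cases hi : k ∈ S i
    · have hiT : i ∈ T := by simp [hT, hi]
      by_cases hj : k ∈ S j
      · -- both i and j in T
        have hjT : j ∈ T.erase i := Finset.mem_erase.2 ⟨hij.symm, by simp [hT, hj]⟩
        set A := ∏ l ∈ (T.erase i).erase j, (1 - x l) with hA
        have hA0 : 0 ≤ A := Finset.prod_nonneg fun l _ => hxl l
        refine ⟨w k * A * (c i / c j),
          w k * A * ((1 - x j) - (1 - x i) * (c i / c j)),
          w k * (1 - A * (1 - x i) * (1 - x j)),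
          mul_nonneg (mul_nonneg (hw k) hA0) hr, fun ε => ?_⟩
        rw [← Finset.mul_prod_erase _ _ hiT, ← Finset.mul_prod_erase _ _ hjT]
        have hprod : ∏ l ∈ (T.erase i).erase j,
            (1 - Function.update (Function.update x i (x i + ε)) j (x j - ε * c i / c j) l) = A := by
          refine Finset.prod_congr rfl fun l hl => ?_
          have hlj : l ≠ j := (Finset.mem_erase.1 hl).1
          have hli : l ≠ i := (Finset.mem_erase.1 (Finset.mem_erase.1 hl).2).1
          rw [Function.update_of_ne hlj, Function.update_of_ne hli]
        rw [hprod, Function.update_of_ne hij, Function.update_self, Function.update_self]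
        field_simp
        ring
      · -- only i in T
        set A := ∏ l ∈ T.erase i, (1 - x l) with hA
        refine ⟨0, w k * A, w k * (1 - (1 - x i) * A), le_refl 0, fun ε => ?_⟩
        rw [← Finset.mul_prod_erase _ _ hiT]
        have hprod : ∏ l ∈ T.erase i,
            (1 - Function.update (Function.update x i (x i + ε)) j (x j - ε * c i / c j) l) = A := by
          refine Finset.prod_congr rfl fun l hl => ?_
          have hli : l ≠ i := (Finset.mem_erase.1 hl).1
          have hlj : l ≠ j := by
            intro h; subst h
            exact hj (by simpa [hT] using (Finset.mem_erase.1 hl).2)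
          rw [Function.update_of_ne hlj, Function.update_of_ne hli]
        rw [hprod, Function.update_of_ne hij, Function.update_self]
        ring
    · by_cases hj : k ∈ S j
      · -- only j in T
        have hjT : j ∈ T := by simp [hT, hj]
        set A := ∏ l ∈ T.erase j, (1 - x l) with hA
        refine ⟨0, -(w k * A * (c i / c j)), w k * (1 - (1 - x j) * A), le_refl 0, fun ε => ?_⟩
        rw [← Finset.mul_prod_erase _ _ hjT]
        have hprod : ∏ l ∈ T.erase j,
            (1 - Function.update (Function.update x i (x i + ε)) j (x j - ε * c i / c j) l) = A := by
          refine Finset.prod_congr rfl fun l hl => ?_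
          have hlj : l ≠ j := (Finset.mem_erase.1 hl).1
          have hli : l ≠ i := by
            intro h; subst h
            exact hi (by simpa [hT] using (Finset.mem_erase.1 hl).2)
          rw [Function.update_of_ne hlj, Function.update_of_ne hli]
        rw [hprod, Function.update_self]
        ring
      · -- neither
        refine ⟨0, 0, w k * (1 - ∏ l ∈ T, (1 - x l)), le_refl 0, fun ε => ?_⟩
        have hprod : ∏ l ∈ T,
            (1 - Function.update (Function.update x i (x i + ε)) j (x j - ε * c i / c j) l)
            = ∏ l ∈ T, (1 - x l) := by
          refine Finset.prod_congr rfl fun l hl => ?_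
          have hli : l ≠ i := by intro h; subst h; exact hi (by simpa [hT] using hl)
          have hlj : l ≠ j := by intro h; subst h; exact hj (by simpa [hT] using hl)
          rw [Function.update_of_ne hlj, Function.update_of_ne hli]
        rw [hprod]; ring
  choose a b d ha h using key
  have heq : (fun ε : ℝ => ∑ k, w k *
      (1 - ∏ l ∈ univ.filter (fun l => k ∈ S l),
        (1 - Function.update (Function.update x i (x i + ε)) j (x j - ε * c i / c j) l)))
      = fun ε => (∑ k, a k) * ε ^ 2 + (∑ k, b k) * ε + ∑ k, d k := by
    funext ε
    rw [Finset.sum_congr rfl fun k _ => h k ε, Finset.sum_add_distrib,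
      Finset.sum_add_distrib, ← Finset.sum_mul, ← Finset.sum_mul]
  rw [heq]
  exact quad_convexOn _ (convex_Icc _ _) _ _ _ (Finset.sum_nonneg fun k _ => ha k)
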